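/- Let f ∈ L¹(X, m) satisfy ∫_X f dm = 0 and ∫_X |f(x)| (d(x₀,x) + d(x,x₀)) dm(x) < ∞ for some x₀ ∈ X. Then for every 1-Lipschitz function ψ : X → ℝ the integral ∫_X f ψ dm converges absolutely, the supremum of ∫_X f ψ dm over all 1-Lipschitz ψ is finite, and there exists a 1-Lipschitz function φ : X → ℝ attaining this supremum. -/
import Mathlib


open MeasureTheory Filter Topology

/-- For a mean-zero, suitably integrable `f`, each integral `∫ f ψ dm` over 1-Lipschitz
`ψ` converges absolutely, the supremum over all 1-Lipschitz `ψ` is finite, and it is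
attained by some 1-Lipschitz function `φ`. -/
theorem stmt_6 {X : Type*} [MetricSpace X] [ProperSpace X]
    [MeasurableSpace X] [BorelSpace X]
    (m : Measure X) (d : X → X → ℝ)
    (hd_nonneg : ∀ x y, 0 ≤ d x y)
    (hd_refl : ∀ x, d x x = 0)
    (hd_tri : ∀ x y z, d x y ≤ d x z + d z y)
    (hd_pos : ∀ x y, d x y = 0 → x = y)
    (hdist : ∀ x y, dist x y = max (d x y) (d y x))
    (f : X → ℝ) (hf_int : Integrable f m) (hf_mean : ∫ x, f x ∂m = 0)
    (x₀ : X) (hfd : Integrable (fun x => |f x| * (d x₀ x + d x x₀)) m) :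
    (∀ ψ : X → ℝ, (∀ x y, ψ y - ψ x ≤ d x y) →
        Integrable (fun x => f x * ψ x) m) ∧
    BddAbove {r : ℝ | ∃ ψ : X → ℝ, (∀ x y, ψ y - ψ x ≤ d x y) ∧
        r = ∫ x, f x * ψ x ∂m} ∧
    ∃ φ : X → ℝ, (∀ x y, φ y - φ x ≤ d x y) ∧
      ∀ ψ : X → ℝ, (∀ x y, ψ y - ψ x ≤ d x y) →
        ∫ x, f x * ψ x ∂m ≤ ∫ x, f x * φ x ∂m := by
  have _inst : Nonempty X := ⟨x₀⟩
  set D : X → ℝ := fun x => d x₀ x + d x x₀ with hD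
  -- 1-Lipschitz (w.r.t. d) implies 1-Lipschitz w.r.t. the metric
  have hlip : ∀ ψ : X → ℝ, (∀ x y, ψ y - ψ x ≤ d x y) → LipschitzWith 1 ψ := by
    intro ψ hψ
    refine LipschitzWith.of_dist_le_mul fun x y => ?_
    rw [NNReal.coe_one, one_mul, Real.dist_eq, abs_sub_le_iff]
    constructor
    · calc ψ x - ψ y ≤ d y x := hψ y x
        _ ≤ dist x y := by rw [hdist x y]; exact le_max_right _ _
    · calc ψ y - ψ x ≤ d x y := hψ x y
        _ ≤ dist x y := by rw [hdist x y]; exact le_max_left _ _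
  have habs : ∀ ψ : X → ℝ, (∀ x y, ψ y - ψ x ≤ d x y) →
      ∀ x, |ψ x - ψ x₀| ≤ D x := by
    intro ψ hψ x
    have h1 : ψ x - ψ x₀ ≤ d x₀ x := hψ x₀ x
    have h2 : ψ x₀ - ψ x ≤ d x x₀ := hψ x x₀
    have h3 := hd_nonneg x₀ x
    have h4 := hd_nonneg x x₀
    rw [abs_le]
    constructor <;> simp only [hD] <;> linarith
  -- integrability
  have hInt : ∀ ψ : X → ℝ, (∀ x y, ψ y - ψ x ≤ d x y) →
      Integrable (fun x => f x * ψ x) m := by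
    intro ψ hψ
    have hcont : Continuous ψ := (hlip ψ hψ).continuous
    have hmeas : AEStronglyMeasurable (fun x => f x * ψ x) m :=
      hf_int.1.mul hcont.aestronglyMeasurable
    have hgi : Integrable (fun x => |f x| * |ψ x₀| + |f x| * D x) m :=
      (hf_int.abs.mul_const _).add hfd
    refine hgi.mono' hmeas (Filter.Eventually.of_forall fun x => ?_)
    have hb := habs ψ hψ x
    have : |ψ x| ≤ |ψ x₀| + D x := by
      have := abs_sub_abs_le_abs_sub (ψ x) (ψ x₀)
      linarith
    calc ‖f x * ψ x‖ = |f x| * |ψ x| := abs_mul _ _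
      _ ≤ |f x| * (|ψ x₀| + D x) := by
          exact mul_le_mul_of_nonneg_left this (abs_nonneg _)
      _ = |f x| * |ψ x₀| + |f x| * D x := by ring
  -- subtracting the value at x₀ doesn't change the integral
  have hval : ∀ ψ : X → ℝ, (∀ x y, ψ y - ψ x ≤ d x y) →
      ∫ x, f x * ψ x ∂m = ∫ x, f x * (ψ x - ψ x₀) ∂m := by
    intro ψ hψ
    have h1 : Integrable (fun x => f x * ψ x) m := hInt ψ hψ
    have h2 : Integrable (fun x => f x * ψ x₀) m := hf_int.mul_const _
    have : (fun x => f x * (ψ x - ψ x₀)) = fun x => f x * ψ x - f x * ψ x₀ := by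
      funext x; ring
    rw [this, integral_sub h1 h2, integral_mul_const, hf_mean]
    ring
  -- uniform bound on the integrals
  set C : ℝ := ∫ x, |f x| * D x ∂m with hC
  have hboundC : ∀ ψ : X → ℝ, (∀ x y, ψ y - ψ x ≤ d x y) →
      ∫ x, f x * ψ x ∂m ≤ C := by
    intro ψ hψ
    rw [hval ψ hψ]
    have hψ' : ∀ x y, (ψ y - ψ x₀) - (ψ x - ψ x₀) ≤ d x y := by
      intro x y; have := hψ x y; linarith
    refine integral_mono (hInt _ hψ') hfd fun x => ?_
    calc f x * (ψ x - ψ x₀) ≤ |f x * (ψ x - ψ x₀)| := le_abs_self _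
      _ = |f x| * |ψ x - ψ x₀| := abs_mul _ _
      _ ≤ |f x| * D x := mul_le_mul_of_nonneg_left (habs ψ hψ x) (abs_nonneg _)
  set S : Set ℝ := {r : ℝ | ∃ ψ : X → ℝ, (∀ x y, ψ y - ψ x ≤ d x y) ∧
      r = ∫ x, f x * ψ x ∂m} with hS
  have hSne : S.Nonempty := by
    refine ⟨∫ x, f x * (0:ℝ) ∂m, fun _ => 0, fun x y => by simpa using hd_nonneg x y, rfl⟩
  have hSbdd : BddAbove S := by
    refine ⟨C, fun r hr => ?_⟩
    obtain ⟨ψ, hψ, rfl⟩ := hr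
    exact hboundC ψ hψ
  refine ⟨hInt, hSbdd, ?_⟩
  -- maximizing sequence
  obtain ⟨v, _hmono, hvtend, hvmem⟩ := exists_seq_tendsto_sSup hSne hSbdd
  choose ψseq hψseq hveq using hvmem
  set χ : ℕ → X → ℝ := fun n x => ψseq n x - ψseq n x₀ with hχ
  have hχlip : ∀ n, ∀ x y, χ n y - χ n x ≤ d x y := by
    intro n x y; have := hψseq n x y; simp only [hχ]; linarith
  have hχbound : ∀ n x, |χ n x| ≤ D x := fun n x => habs (ψseq n) (hψseq n) x
  have hχint : ∀ n, ∫ x, f x * χ n x ∂m = v n := by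
    intro n; rw [hveq n, hval (ψseq n) (hψseq n)]
  -- dense sequence
  set u : ℕ → X := TopologicalSpace.denseSeq X with hu
  have hudense : DenseRange u := TopologicalSpace.denseRange_denseSeq X
  -- compactness argument via pointwise convergence on the dense sequence
  set K : Set (ℕ → ℝ) := Set.univ.pi fun i => Set.Icc (-(D (u i))) (D (u i)) with hK
  have hKcomp : IsCompact K := isCompact_univ_pi fun i => isCompact_Icc
  have hmemK : ∀ n, (fun i => χ n (u i)) ∈ K := by
    intro n
    rw [hK, Set.mem_univ_pi]
    intro i
    have := hχbound n (u i)
    rw [abs_le] at this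
    exact this
  obtain ⟨L, _hLK, σ, hσmono, hσtend⟩ := hKcomp.tendsto_subseq hmemK
  have hgi : ∀ i, Tendsto (fun n => χ (σ n) (u i)) atTop (𝓝 (L i)) := by
    intro i
    exact (tendsto_pi_nhds.mp hσtend) i
  -- pointwise Cauchy everywhere
  have hcau : ∀ x, CauchySeq (fun n => χ (σ n) x) := by
    intro x
    rw [Metric.cauchySeq_iff]
    intro ε hε
    obtain ⟨i, hi⟩ := Metric.denseRange_iff.mp hudense x (ε/3) (by linarith)
    have hcui : CauchySeq (fun n => χ (σ n) (u i)) := (hgi i).cauchySeq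
    rw [Metric.cauchySeq_iff] at hcui
    obtain ⟨N, hN⟩ := hcui (ε/3) (by linarith)
    refine ⟨N, fun a ha b hb => ?_⟩
    have l1 : dist (χ (σ a) x) (χ (σ a) (u i)) ≤ dist x (u i) := by
      simpa using (hlip _ (hχlip (σ a))).dist_le_mul x (u i)
    have l2 : dist (χ (σ b) (u i)) (χ (σ b) x) ≤ dist x (u i) := by
      simpa [dist_comm] using (hlip _ (hχlip (σ b))).dist_le_mul (u i) x
    have l3 := hN a ha b hb
    calc dist (χ (σ a) x) (χ (σ b) x)
        ≤ dist (χ (σ a) x) (χ (σ a) (u i)) + dist (χ (σ a) (u i)) (χ (σ b) (u i))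
          + dist (χ (σ b) (u i)) (χ (σ b) x) := dist_triangle4 _ _ _ _
      _ < ε := by linarith
  have hlim : ∀ x, ∃ l : ℝ, Tendsto (fun n => χ (σ n) x) atTop (𝓝 l) := by
    intro x
    exact cauchySeq_tendsto_of_complete (hcau x)
  choose φ hφtend using hlim
  -- φ is 1-Lipschitz w.r.t. d
  have hφlip : ∀ x y, φ y - φ x ≤ d x y := by
    intro x y
    have ht : Tendsto (fun n => χ (σ n) y - χ (σ n) x) atTop (𝓝 (φ y - φ x)) :=
      (hφtend y).sub (hφtend x)
    exact le_of_tendsto ht (Filter.Eventually.of_forall fun n => hχlip (σ n) x y)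
  -- dominated convergence
  have hDCT : Tendsto (fun n => ∫ x, f x * χ (σ n) x ∂m) atTop
      (𝓝 (∫ x, f x * φ x ∂m)) := by
    refine tendsto_integral_of_dominated_convergence (fun x => |f x| * D x)
      (fun n => hf_int.1.mul (hlip _ (hχlip (σ n))).continuous.aestronglyMeasurable)
      hfd (fun n => Filter.Eventually.of_forall fun x => ?_)
      (Filter.Eventually.of_forall fun x => (tendsto_const_nhds.mul (hφtend x)))
    calc ‖f x * χ (σ n) x‖ = |f x| * |χ (σ n) x| := abs_mul _ _
      _ ≤ |f x| * D x := mul_le_mul_of_nonneg_left (hχbound (σ n) x) (abs_nonneg _)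
  have hvσ : Tendsto (fun n => ∫ x, f x * χ (σ n) x ∂m) atTop (𝓝 (sSup S)) := by
    have : (fun n => ∫ x, f x * χ (σ n) x ∂m) = v ∘ σ := by
      funext n; exact hχint (σ n)
    rw [this]
    exact hvtend.comp hσmono.tendsto_atTop
  have hφval : ∫ x, f x * φ x ∂m = sSup S := tendsto_nhds_unique hDCT hvσ
  refine ⟨φ, hφlip, fun ψ hψ => ?_⟩
  rw [hφval]
  exact le_csSup hSbdd ⟨ψ, hψ, rfl⟩
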